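/- Let V and W be inner product spaces, P : W → W an orthogonal projection onto a subspace, and let I_h : W → W be a bounded linear operator satisfying I_h = I_h ∘ P. Suppose T : V → V is a linear map, imp : V → W is a linear map, and imp ∘ T = I_h ∘ imp. Suppose further that imp is surjective onto the range of P and that ‖v‖_V = ‖imp v‖_W defines the norm on V. Then for every n ≥ 1, the operator norm of Tⁿ on V equals the operator norm of (I_h)ⁿ on W. -/

import Mathlib

/-- If `imp : V → W` is a linear isometry onto the range of an orthogonal projection `P`,
`I_h = I_h ∘ P`, and `imp ∘ T = I_h ∘ imp`, then `‖Tⁿ‖ = ‖I_hⁿ‖` for every `n ≥ 1`. -/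
theorem stmt_3 (V W : Type*) [NormedAddCommGroup V] [NormedSpace ℂ V]
    [NormedAddCommGroup W] [InnerProductSpace ℂ W]
    (imp : V →ₗ[ℂ] W) (hiso : ∀ v : V, ‖imp v‖ = ‖v‖)
    (P : W →L[ℂ] W)
    (hPrange : ∀ w : W, P w ∈ Set.range imp)
    (hPid : ∀ w ∈ Set.range imp, P w = w)
    (hPorth : ∀ w : W, ∀ v ∈ Set.range imp, (inner ℂ (w - P w) v : ℂ) = 0)
    (T : V →L[ℂ] V) (Ih : W →L[ℂ] W)
    (hIhP : Ih.comp P = Ih)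
    (hintw : ∀ v : V, imp (T v) = Ih (imp v))
    (n : ℕ) (hn : 1 ≤ n) :
    ‖T ^ n‖ = ‖Ih ^ n‖ := by
  -- intertwining for powers
  have hpow : ∀ m : ℕ, ∀ v : V, imp ((T ^ m) v) = (Ih ^ m) (imp v) := by
    intro m
    induction m with
    | zero => intro v; simp
    | succ k ih =>
      intro v
      rw [pow_succ, pow_succ]
      simp only [ContinuousLinearMap.mul_apply]
      rw [ih, hintw]
  -- norm of P w ≤ norm w
  have hPle : ∀ w : W, ‖P w‖ ≤ ‖w‖ := by
    intro w
    have horth : (inner ℂ (w - P w) (P w) : ℂ) = 0 := hPorth w (P w) (hPrange w)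
    have h := norm_add_sq_eq_norm_sq_add_norm_sq_of_inner_eq_zero _ _ horth
    have hw : w - P w + P w = w := by abel
    rw [hw] at h
    nlinarith [norm_nonneg (w - P w), norm_nonneg (P w), norm_nonneg w]
  -- Ih^n ∘ P = Ih^n
  have hPn : ∀ w : W, (Ih ^ n) (P w) = (Ih ^ n) w := by
    intro w
    obtain ⟨m, hm⟩ := Nat.exists_eq_add_of_le hn
    subst hm
    have h1 : Ih (P w) = Ih w := by
      conv_rhs => rw [← hIhP]
      rfl
    rw [add_comm, pow_succ]
    simp only [ContinuousLinearMap.mul_apply]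
    rw [h1]
  apply le_antisymm
  · apply ContinuousLinearMap.opNorm_le_bound _ (norm_nonneg _)
    intro v
    rw [← hiso ((T ^ n) v), hpow n v, ← hiso v]
    exact (Ih ^ n).le_opNorm _
  · apply ContinuousLinearMap.opNorm_le_bound _ (norm_nonneg _)
    intro w
    obtain ⟨v, hv⟩ := hPrange w
    calc ‖(Ih ^ n) w‖ = ‖(Ih ^ n) (imp v)‖ := by rw [hv, hPn]
      _ = ‖(T ^ n) v‖ := by rw [← hpow n v, hiso]
      _ ≤ ‖T ^ n‖ * ‖v‖ := (T ^ n).le_opNorm v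
      _ = ‖T ^ n‖ * ‖P w‖ := by rw [← hiso v, hv]
      _ ≤ ‖T ^ n‖ * ‖w‖ := by
          exact mul_le_mul_of_nonneg_left (hPle w) (norm_nonneg _)
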